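/- For a tree topology, the function u ↦ −log det(G diag(u^+) G^T) + trace(Ξ diag(u) Ξ^T K), defined on positive weight vectors u ∈ ℝ^{n−1}, attains its unique stationary point at u_j = 1/(ξ_j^T K ξ_j), provided ξ_j^T K ξ_j > 0 for all j. -/

import Mathlib

open Matrix BigOperators

/-- For a tree topology, the objective J(u) = −log det(G diag(u⁺) Gᵀ) + tr(Ξ diag(u) Ξᵀ K)
has its unique stationary point on positive weight vectors at u_j = 1/(ξ_jᵀ K ξ_j). -/
theorem tree_objective_unique_stationary_point (n : ℕ) (hn : 0 < n)
    (ξ : Fin (n - 1) → Fin n → ℝ)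
    (Ξ : Matrix (Fin n) (Fin (n - 1)) ℝ) (hΞ : ∀ i j, Ξ i j = ξ j i)
    (G : Matrix (Fin n) (Fin n) ℝ)
    (hG : ∀ i j, G i j = if h : (j : ℕ) < n - 1 then ξ ⟨j, h⟩ i else 1)
    (hGinv : IsUnit G.det)
    (K : Matrix (Fin n) (Fin n) ℝ) (hK : K.IsSymm)
    (hKpos : ∀ j, 0 < ξ j ⬝ᵥ (K *ᵥ ξ j))
    (uplus : (Fin (n - 1) → ℝ) → Fin n → ℝ)
    (huplus : ∀ u j, uplus u j = if h : (j : ℕ) < n - 1 then u ⟨j, h⟩ else (n : ℝ)⁻¹)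
    (J : (Fin (n - 1) → ℝ) → ℝ)
    (hJ : ∀ u, J u = -Real.log (G * Matrix.diagonal (uplus u) * Gᵀ).det
        + Matrix.trace (Ξ * Matrix.diagonal u * Ξᵀ * K)) :
    ∀ u : Fin (n - 1) → ℝ, (∀ j, 0 < u j) →
      (fderiv ℝ J u = 0 ↔ u = fun j => (ξ j ⬝ᵥ (K *ᵥ ξ j))⁻¹) := by
  obtain ⟨m, rfl⟩ := Nat.exists_eq_succ_of_ne_zero hn.ne'
  intro u hu
  set c : Fin (m + 1 - 1) → ℝ := fun j => ξ j ⬝ᵥ (K *ᵥ ξ j) with hc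
  -- trace formula
  have htr : ∀ v : Fin (m + 1 - 1) → ℝ,
      Matrix.trace (Ξ * Matrix.diagonal v * Ξᵀ * K) = ∑ j, c j * v j := by
    intro v
    have h1 : Ξ * Matrix.diagonal v * Ξᵀ * K = Ξ * (Matrix.diagonal v * (Ξᵀ * K)) := by
      simp [Matrix.mul_assoc]
    have key : ∀ (N : Matrix (Fin (m + 1 - 1)) (Fin (m + 1 - 1)) ℝ) (d : Fin (m + 1 - 1) → ℝ),
        Matrix.trace (Matrix.diagonal d * N) = ∑ j, d j * N j j := by
      intro N d
      simp [Matrix.trace, Matrix.diag, Matrix.diagonal_mul]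
    rw [h1, Matrix.trace_mul_comm, Matrix.mul_assoc, key]
    refine Finset.sum_congr rfl fun j _ => ?_
    simp only [Matrix.mul_apply, Matrix.transpose_apply, hΞ, dotProduct,
      Matrix.mulVec, Finset.sum_mul, Finset.mul_sum]
    rw [Finset.sum_comm (f := fun x i => v j * (ξ j i * K i x * ξ j x))]
    simp only [hc, dotProduct, Matrix.mulVec, Finset.sum_mul, Finset.mul_sum]
    refine Finset.sum_congr rfl fun a _ => ?_
    refine Finset.sum_congr rfl fun b _ => ?_
    ring
  -- det formula
  have hdet : ∀ v : Fin (m + 1 - 1) → ℝ,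
      (G * Matrix.diagonal (uplus v) * Gᵀ).det
        = G.det ^ 2 * ((∏ j, v j) * ((m : ℝ) + 1)⁻¹) := by
    intro v
    rw [Matrix.det_mul, Matrix.det_mul, Matrix.det_transpose, Matrix.det_diagonal]
    have h2 : ∏ j, uplus v j = (∏ j, v j) * ((m : ℝ) + 1)⁻¹ := by
      rw [Fin.prod_univ_castSucc]
      congr 1
      · refine Finset.prod_congr rfl fun j _ => ?_
        rw [huplus]
        simp [Fin.is_lt]
      · rw [huplus]
        simp
    rw [h2]; ring
  -- the open set of positive vectors
  have hSopen : IsOpen {v : Fin (m + 1 - 1) → ℝ | ∀ j, 0 < v j} := by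
    have h4 : {v : Fin (m + 1 - 1) → ℝ | ∀ j, 0 < v j}
        = ⋂ j, {v : Fin (m + 1 - 1) → ℝ | 0 < v j} := by
      ext v; simp [Set.mem_iInter]
    rw [h4]
    exact isOpen_iInter_of_finite fun j => isOpen_lt continuous_const (continuous_apply j)
  have hdetne : G.det ^ 2 ≠ 0 := pow_ne_zero _ hGinv.ne_zero
  set C : ℝ := -(Real.log (G.det ^ 2) + Real.log (((m : ℝ) + 1)⁻¹)) with hC
  set g : (Fin (m + 1 - 1) → ℝ) → ℝ :=
    fun v => C + ∑ j, (c j * v j - Real.log (v j)) with hg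
  have hJg : ∀ v ∈ {v : Fin (m + 1 - 1) → ℝ | ∀ j, 0 < v j}, J v = g v := by
    intro v hv
    have hv' : ∀ j, 0 < v j := hv
    have hpne : (∏ j, v j) ≠ 0 := Finset.prod_ne_zero_iff.2 fun j _ => (hv' j).ne'
    rw [hJ, hdet, htr, hg]
    rw [Real.log_mul hdetne (mul_ne_zero hpne (by positivity)),
        Real.log_mul hpne (by positivity),
        Real.log_prod fun j _ => (hv' j).ne']
    simp only [hC, Finset.sum_sub_distrib]
    ring
  have heq : J =ᶠ[nhds u] g :=
    Filter.eventuallyEq_of_mem (hSopen.mem_nhds (show ∀ j, 0 < u j from hu)) hJg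
  set L : (Fin (m + 1 - 1) → ℝ) →L[ℝ] ℝ :=
    ∑ j, (c j - (u j)⁻¹) • (ContinuousLinearMap.proj j) with hL
  have hgd : HasFDerivAt g L u := by
    have hsum : HasFDerivAt
        (fun v : Fin (m + 1 - 1) → ℝ => ∑ j, (c j * v j - Real.log (v j))) L u := by
      rw [hL]
      refine HasFDerivAt.fun_sum fun j _ => ?_
      have h1 : HasDerivAt (fun x : ℝ => c j * x - Real.log x) (c j - (u j)⁻¹) (u j) := by
        have h2 := ((hasDerivAt_id (u j)).const_mul (c j)).fun_sub
          (Real.hasDerivAt_log (hu j).ne')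
        simpa using h2
      have h3 : HasFDerivAt (fun v : Fin (m + 1 - 1) → ℝ => v j)
          (ContinuousLinearMap.proj j : (Fin (m + 1 - 1) → ℝ) →L[ℝ] ℝ) u :=
        (ContinuousLinearMap.proj j : (Fin (m + 1 - 1) → ℝ) →L[ℝ] ℝ).hasFDerivAt
      exact h1.comp_hasFDerivAt u h3
    exact hsum.const_add C
  rw [heq.fderiv_eq, hgd.fderiv]
  constructor
  · intro h0
    funext k
    have h2 := congrArg
      (fun T : (Fin (m + 1 - 1) → ℝ) →L[ℝ] ℝ => T (Pi.single k 1)) h0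
    simp only [hL, ContinuousLinearMap.sum_apply, ContinuousLinearMap.smul_apply,
      ContinuousLinearMap.proj_apply, ContinuousLinearMap.zero_apply, Pi.single_apply,
      smul_eq_mul, mul_ite, mul_one, mul_zero, Finset.sum_ite_eq', Finset.mem_univ,
      if_true] at h2
    have h3 : (u k)⁻¹ = c k := by linarith
    show u k = (c k)⁻¹
    rw [← h3, inv_inv]
  · intro h
    have hcoef : ∀ j, c j - (u j)⁻¹ = 0 := by
      intro j; rw [h]; simp [hc]
    rw [hL]
    exact Finset.sum_eq_zero fun j _ => by rw [hcoef j, zero_smul]
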